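/- arXiv:1408.3800 — 2 statements merged into one kernel-verified Lean document; each statement's English description precedes it below -/
import Mathlib

section
/- (Less noisy lemma with side information) Suppose the channel from X to Y is less noisy than the channel from X to Z given side information S, meaning I(U;Y|S=s) ≥ I(U;Z|S=s) for every s and every U with U → (X,S) → (Y,Z). Let the channel be memoryless and let M be any random variable such that M → (Xⁿ, Sⁿ) → (Yⁿ, Zⁿ) is a Markov chain. Then for every 1 ≤ i ≤ n: I(Y^{i-1}; Y_i | M, Sⁿ) ≥ I(Z^{i-1}; Y_i | M, Sⁿ) and I(Y^{i-1}; Z_i | M, Sⁿ) ≥ I(Z^{i-1}; Z_i | M, Sⁿ). -/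
open scoped Classical
open Finset

noncomputable section

/-- Probability that a discrete random variable `X` takes the value `x`,
under the pmf `p` on a finite sample space. -/
noncomputable def dpr {Ω 𝒳 : Type*} [Fintype Ω] (p : Ω → ℝ) (X : Ω → 𝒳) (x : 𝒳) : ℝ :=
  ∑ ω, if X ω = x then p ω else 0

/-- Shannon entropy (base 2) of a discrete random variable. -/
noncomputable def dH {Ω 𝒳 : Type*} [Fintype Ω] [Fintype 𝒳] (p : Ω → ℝ) (X : Ω → 𝒳) : ℝ :=
  - ∑ x, dpr p X x * Real.logb 2 (dpr p X x)

/-- Mutual information I(X;Y). -/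
noncomputable def dI {Ω 𝒳 𝒴 : Type*} [Fintype Ω] [Fintype 𝒳] [Fintype 𝒴]
    (p : Ω → ℝ) (X : Ω → 𝒳) (Y : Ω → 𝒴) : ℝ :=
  dH p X + dH p Y - dH p (fun ω => (X ω, Y ω))

/-- Conditional mutual information I(X;Y∣Z). -/
noncomputable def dCI {Ω 𝒳 𝒴 𝒵 : Type*} [Fintype Ω] [Fintype 𝒳] [Fintype 𝒴] [Fintype 𝒵]
    (p : Ω → ℝ) (X : Ω → 𝒳) (Y : Ω → 𝒴) (Z : Ω → 𝒵) : ℝ :=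
  dH p (fun ω => (X ω, Z ω)) + dH p (fun ω => (Y ω, Z ω)) - dH p Z
    - dH p (fun ω => (X ω, Y ω, Z ω))

/-- Conditional entropy H(X∣Y). -/
noncomputable def dCH {Ω 𝒳 𝒴 : Type*} [Fintype Ω] [Fintype 𝒳] [Fintype 𝒴]
    (p : Ω → ℝ) (X : Ω → 𝒳) (Y : Ω → 𝒴) : ℝ :=
  dH p (fun ω => (X ω, Y ω)) - dH p Y

/-- `p` is a probability mass function. -/
def IsPMF {Ω : Type*} [Fintype Ω] (p : Ω → ℝ) : Prop := (∀ ω, 0 ≤ p ω) ∧ ∑ ω, p ω = 1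

/-- The Markov chain X → Y → Z: X and Z are conditionally independent given Y. -/
def MarkovChain {Ω 𝒳 𝒴 𝒵 : Type*} [Fintype Ω] (p : Ω → ℝ)
    (X : Ω → 𝒳) (Y : Ω → 𝒴) (Z : Ω → 𝒵) : Prop :=
  ∀ x y z, dpr p (fun ω => (X ω, Y ω, Z ω)) (x, y, z) * dpr p Y y =
    dpr p (fun ω => (X ω, Y ω)) (x, y) * dpr p (fun ω => (Z ω, Y ω)) (z, y)

/-- Independence of two discrete random variables. -/
def dIndep {Ω 𝒳 𝒴 : Type*} [Fintype Ω] (p : Ω → ℝ) (X : Ω → 𝒳) (Y : Ω → 𝒴) : Prop :=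
  ∀ x y, dpr p (fun ω => (X ω, Y ω)) (x, y) = dpr p X x * dpr p Y y

end

section Helpers
open Finset
variable {Ω α β δ : Type*} [Fintype Ω] {p : Ω → ℝ}

/-- entropy functional on raw pmfs -/
noncomputable def entf {α : Type*} [Fintype α] (q : α → ℝ) : ℝ :=
  - ∑ a, q a * Real.logb 2 (q a)

lemma dH_eq_entf [Fintype α] (X : Ω → α) : dH p X = entf (dpr p X) := rfl

lemma dpr_nonneg (hp : ∀ ω, 0 ≤ p ω) (X : Ω → α) (x : α) : 0 ≤ dpr p X x := by
  refine Finset.sum_nonneg fun ω _ => ?_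
  split <;> simp [hp ω]

lemma dpr_comp [Fintype α] (X : Ω → α) (g : α → β) (b : β) :
    dpr p (fun ω => g (X ω)) b = ∑ a, if g a = b then dpr p X a else 0 := by
  unfold dpr
  have hpull : ∀ a, (if g a = b then ∑ ω, if X ω = a then p ω else 0 else 0)
      = ∑ ω, if g a = b then (if X ω = a then p ω else 0) else 0 := by
    intro a; by_cases h : g a = b <;> simp [h]
  rw [Finset.sum_congr rfl fun a _ => hpull a, Finset.sum_comm]
  refine Finset.sum_congr rfl fun ω _ => ?_
  have hsw : ∀ a, (if g a = b then (if X ω = a then p ω else 0) else 0)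
      = (if X ω = a then (if g a = b then p ω else 0) else 0) := by
    intro a; by_cases h1 : g a = b <;> by_cases h2 : X ω = a <;> simp [h1, h2]
  rw [Finset.sum_congr rfl fun a _ => hsw a,
    Finset.sum_ite_eq Finset.univ (X ω) (fun a => if g a = b then p ω else 0)]
  simp

lemma dpr_comp_inj [Fintype α] {g : α → β} (hg : Function.Injective g) (X : Ω → α) (a : α) :
    dpr p (fun ω => g (X ω)) (g a) = dpr p X a := by
  unfold dpr
  refine Finset.sum_congr rfl fun ω _ => ?_
  simp [hg.eq_iff]

lemma entf_relabel [Fintype α] [Fintype β] {g : α → β} (hg : Function.Injective g) (q : α → ℝ) :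
    entf (fun b => ∑ a, if g a = b then q a else 0) = entf q := by
  unfold entf
  congr 1
  have h1 : ∀ b ∈ (Finset.univ : Finset β), b ∉ Finset.univ.image g →
      (∑ a, if g a = b then q a else 0) * Real.logb 2 (∑ a, if g a = b then q a else 0) = 0 := by
    intro b _ hb
    simp only [Finset.mem_image, Finset.mem_univ, true_and, not_exists] at hb
    have : (∑ a, if g a = b then q a else 0) = 0 :=
      Finset.sum_eq_zero fun a _ => by simp [hb a]
    rw [this]; simp
  rw [← Finset.sum_subset (Finset.subset_univ (Finset.univ.image g)) h1]
  rw [Finset.sum_image (fun a _ a' _ h => hg h)]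
  refine Finset.sum_congr rfl fun a _ => ?_
  have : (∑ a', if g a' = g a then q a' else 0) = q a := by
    rw [Finset.sum_eq_single a] <;> simp +contextual [hg.eq_iff]
  rw [this]

lemma dH_comp_inj [Fintype α] [Fintype β] {g : α → β} (hg : Function.Injective g) (X : Ω → α) :
    dH p (fun ω => g (X ω)) = dH p X := by
  rw [dH_eq_entf, dH_eq_entf]
  rw [show dpr p (fun ω => g (X ω)) = fun b => ∑ a, if g a = b then dpr p X a else 0 from funext (dpr_comp X g)]
  exact entf_relabel hg _

end Helpers
section Cond
open Finset
variable {Ω α β δ : Type*} [Fintype Ω] {p : Ω → ℝ}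

lemma dpr_snd [Fintype α] [Fintype δ] (T : Ω → α) (D : Ω → δ) (d : δ) :
    dpr p D d = ∑ t, dpr p (fun ω => (T ω, D ω)) (t, d) := by
  have h := dpr_comp (p := p) (fun ω => (T ω, D ω)) Prod.snd d
  rw [show dpr p D d = _ from h, Fintype.sum_prod_type]
  refine Finset.sum_congr rfl fun t _ => ?_
  rw [Finset.sum_ite_eq' Finset.univ d (fun d' => dpr p (fun ω => (T ω, D ω)) (t, d'))]
  simp

lemma dpr_comp_fst [Fintype α] [Fintype δ] (T : Ω → α) (D : Ω → δ) (g : α → β) (b : β) (d : δ) :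
    dpr p (fun ω => (g (T ω), D ω)) (b, d)
      = ∑ a, if g a = b then dpr p (fun ω => (T ω, D ω)) (a, d) else 0 := by
  have h0 := dpr_comp (p := p) (fun ω => (T ω, D ω)) (fun q => (g q.1, q.2)) (b, d)
  rw [show dpr p (fun ω => (g (T ω), D ω)) (b, d) = _ from h0, Fintype.sum_prod_type]
  refine Finset.sum_congr rfl fun a _ => ?_
  by_cases hg : g a = b
  · rw [Finset.sum_eq_single d]
    · simp [hg]
    · intro d' _ hd'; simp [Prod.ext_iff, hd']
    · simp
  · rw [Finset.sum_eq_zero (fun d' _ => by simp [Prod.ext_iff, hg]), if_neg hg]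

/-- conditional pmf of `T` given `D = d` -/
noncomputable def condp (p : Ω → ℝ) (T : Ω → α) (D : Ω → δ) (d : δ) : α → ℝ :=
  fun t => dpr p (fun ω => (T ω, D ω)) (t, d) / dpr p D d

lemma condp_nonneg [Fintype α] [Fintype δ] (hp : ∀ ω, 0 ≤ p ω) (T : Ω → α) (D : Ω → δ) (d : δ) (t : α) :
    0 ≤ condp p T D d t :=
  div_nonneg (dpr_nonneg hp _ _) (dpr_nonneg hp _ _)

lemma dpr_pair_le [Fintype α] [Fintype δ] (hp : ∀ ω, 0 ≤ p ω) (T : Ω → α) (D : Ω → δ) (t : α) (d : δ) :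
    dpr p (fun ω => (T ω, D ω)) (t, d) ≤ dpr p D d := by
  rw [dpr_snd T D d]
  exact Finset.single_le_sum (f := fun t => dpr p (fun ω => (T ω, D ω)) (t, d))
    (fun t _ => dpr_nonneg hp _ _) (Finset.mem_univ t)

lemma condp_sum [Fintype α] [Fintype δ] (T : Ω → α) (D : Ω → δ) (d : δ) (hd : dpr p D d ≠ 0) :
    ∑ t, condp p T D d t = 1 := by
  unfold condp
  rw [← Finset.sum_div, ← dpr_snd, div_self hd]

lemma dpr_pair_eq [Fintype α] [Fintype δ] (hp : ∀ ω, 0 ≤ p ω) (T : Ω → α) (D : Ω → δ) (t : α) (d : δ) :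
    dpr p (fun ω => (T ω, D ω)) (t, d) = dpr p D d * condp p T D d t := by
  by_cases hd : dpr p D d = 0
  · have h1 : dpr p (fun ω => (T ω, D ω)) (t, d) = 0 :=
      le_antisymm (hd ▸ dpr_pair_le hp T D t d) (dpr_nonneg hp _ _)
    simp [h1, hd]
  · rw [condp]; field_simp

lemma condp_comp [Fintype α] [Fintype δ] (T : Ω → α) (D : Ω → δ) (g : α → β) (d : δ) (b : β) :
    condp p (fun ω => g (T ω)) D d b = ∑ a, if g a = b then condp p T D d a else 0 := by
  unfold condp
  rw [dpr_comp_fst T D g b d, Finset.sum_div]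
  refine Finset.sum_congr rfl fun a _ => ?_
  by_cases h : g a = b <;> simp [h]

lemma entf_condp_comp [Fintype α] [Fintype δ] [Fintype β] (T : Ω → α) (D : Ω → δ) {g : α → β}
    (hg : Function.Injective g) (d : δ) :
    entf (condp p (fun ω => g (T ω)) D d) = entf (condp p T D d) := by
  rw [show condp p (fun ω => g (T ω)) D d = fun b => ∑ a, if g a = b then condp p T D d a else 0
    from funext fun b => condp_comp T D g d b]
  exact entf_relabel hg _

lemma dH_pair_decomp [Fintype α] [Fintype δ] (hp : ∀ ω, 0 ≤ p ω) (T : Ω → α) (D : Ω → δ) :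
    dH p (fun ω => (T ω, D ω)) = dH p D + ∑ d, dpr p D d * entf (condp p T D d) := by
  have hper : ∀ d : δ, ∑ t, dpr p (fun ω => (T ω, D ω)) (t, d)
        * Real.logb 2 (dpr p (fun ω => (T ω, D ω)) (t, d))
      = dpr p D d * Real.logb 2 (dpr p D d) - dpr p D d * entf (condp p T D d) := by
    intro d
    by_cases hd : dpr p D d = 0
    · have h0 : ∀ t, dpr p (fun ω => (T ω, D ω)) (t, d) = 0 := fun t =>
        le_antisymm (hd ▸ dpr_pair_le hp T D t d) (dpr_nonneg hp _ _)
      simp [h0, hd]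
    · have hterm : ∀ t, dpr p (fun ω => (T ω, D ω)) (t, d)
          * Real.logb 2 (dpr p (fun ω => (T ω, D ω)) (t, d))
          = dpr p D d * (condp p T D d t * Real.logb 2 (dpr p D d)
              + condp p T D d t * Real.logb 2 (condp p T D d t)) := by
        intro t
        rw [dpr_pair_eq hp T D t d]
        by_cases hc : condp p T D d t = 0
        · simp [hc]
        · rw [Real.logb_mul hd hc]; ring
      rw [Finset.sum_congr rfl fun t _ => hterm t, ← Finset.mul_sum]
      rw [Finset.sum_add_distrib, ← Finset.sum_mul, condp_sum T D d hd]
      unfold entf; ring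
  show - ∑ x : α × δ, _ = _
  rw [Fintype.sum_prod_type, Finset.sum_comm, Finset.sum_congr rfl fun d _ => hper d,
    Finset.sum_sub_distrib]
  unfold dH
  ring

lemma dCI_decomp [Fintype α] [Fintype β] [Fintype δ] (hp : ∀ ω, 0 ≤ p ω)
    (X : Ω → α) (Y : Ω → β) (D : Ω → δ) :
    dCI p X Y D = ∑ d, dpr p D d * (entf (condp p X D d) + entf (condp p Y D d)
      - entf (condp p (fun ω => (X ω, Y ω)) D d)) := by
  have hinj : Function.Injective (fun q : (α × β) × δ => (q.1.1, q.1.2, q.2)) := by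
    intro q q' h
    simp only [Prod.mk.injEq] at h
    exact Prod.ext (Prod.ext h.1 h.2.1) h.2.2
  have h3 : dH p (fun ω => (X ω, Y ω, D ω))
      = dH p (fun ω => ((X ω, Y ω), D ω)) := by
    exact dH_comp_inj hinj (fun ω => ((X ω, Y ω), D ω))
  unfold dCI
  rw [h3, dH_pair_decomp hp X D, dH_pair_decomp hp Y D,
    dH_pair_decomp hp (fun ω => (X ω, Y ω)) D]
  simp only [mul_add, mul_sub]
  rw [Finset.sum_sub_distrib, Finset.sum_add_distrib]
  ring

lemma dCI_compare [Fintype α] [Fintype β] {α' : Type*} [Fintype α'] [Fintype δ]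
    (hp : ∀ ω, 0 ≤ p ω) (X : Ω → α) (X' : Ω → α') (Y : Ω → β) (D : Ω → δ)
    (h : ∀ d, dpr p D d ≠ 0 →
      entf (condp p X D d) + entf (condp p Y D d) - entf (condp p (fun ω => (X ω, Y ω)) D d)
      ≥ entf (condp p X' D d) + entf (condp p Y D d) - entf (condp p (fun ω => (X' ω, Y ω)) D d)) :
    dCI p X Y D ≥ dCI p X' Y D := by
  rw [dCI_decomp hp X Y D, dCI_decomp hp X' Y D]
  refine Finset.sum_le_sum fun d _ => ?_
  by_cases hd : dpr p D d = 0
  · simp [hd]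
  · exact mul_le_mul_of_nonneg_left (h d hd) (dpr_nonneg hp _ _)

end Cond
section Key
open Finset
variable {Ω ℳ 𝒳 𝒮 𝒴 𝒵 β : Type*} [Fintype Ω] [Fintype ℳ] [Fintype 𝒳] [Fintype 𝒮]
  [Fintype 𝒴] [Fintype 𝒵] [Fintype β]

lemma prod_split {M : Type*} [CommMonoid M] {n : ℕ} (κ : Fin n) (f : Fin n → M) :
    ∏ j, f j = f κ * ∏ j : {j : Fin n // j ≠ κ}, f j.1 := by
  rw [Fintype.prod_eq_mul_prod_compl κ f]
  congr 1
  exact (Finset.prod_subtype (p := fun j => j ≠ κ) ({κ}ᶜ : Finset (Fin n))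
    (fun x => by simp) f)

lemma key_fact {n : ℕ} (p : Ω → ℝ)
    (Q : 𝒳 → 𝒮 → 𝒴 × 𝒵 → ℝ) (hQ : ∀ x s, ∑ yz, Q x s yz = 1)
    (M : Ω → ℳ) (Xs : Fin n → Ω → 𝒳) (Ss : Fin n → Ω → 𝒮)
    (Ys : Fin n → Ω → 𝒴) (Zs : Fin n → Ω → 𝒵)
    (ν : ℳ → (Fin n → 𝒳) → (Fin n → 𝒮) → ℝ)
    (hMem : ∀ m xs ss ys zs,
      dpr p (fun ω => (M ω, (fun i => Xs i ω), (fun i => Ss i ω),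
          (fun i => Ys i ω), (fun i => Zs i ω))) (m, xs, ss, ys, zs)
        = ν m xs ss * ∏ i, Q (xs i) (ss i) (ys i, zs i))
    (κ : Fin n)
    (G₁ : ℳ → (Fin n → 𝒳) → (Fin n → 𝒮) → ({j : Fin n // j ≠ κ} → 𝒴)
      → ({j : Fin n // j ≠ κ} → 𝒵) → β)
    (b : β) (x : 𝒳) (s : 𝒮)
    (hbx : ∀ m xs ss ys' zs', G₁ m xs ss ys' zs' = b → xs κ = x ∧ ss κ = s)
    (y : 𝒴) (z : 𝒵) :
    dpr p (fun ω => (G₁ (M ω) (fun j => Xs j ω) (fun j => Ss j ω)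
        (fun j => Ys j.1 ω) (fun j => Zs j.1 ω), Ys κ ω, Zs κ ω)) (b, y, z)
      = dpr p (fun ω => G₁ (M ω) (fun j => Xs j ω) (fun j => Ss j ω)
          (fun j => Ys j.1 ω) (fun j => Zs j.1 ω)) b * Q x s (y, z) := by
  classical
  have h1 := dpr_comp (p := p)
    (fun ω => (M ω, (fun i => Xs i ω), (fun i => Ss i ω), (fun i => Ys i ω), (fun i => Zs i ω)))
    (fun γ => (G₁ γ.1 γ.2.1 γ.2.2.1 (fun j => γ.2.2.2.1 j.1) (fun j => γ.2.2.2.2 j.1),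
      γ.2.2.2.1 κ, γ.2.2.2.2 κ)) (b, y, z)
  have h2 := dpr_comp (p := p)
    (fun ω => (M ω, (fun i => Xs i ω), (fun i => Ss i ω), (fun i => Ys i ω), (fun i => Zs i ω)))
    (fun γ => G₁ γ.1 γ.2.1 γ.2.2.1 (fun j => γ.2.2.2.1 j.1) (fun j => γ.2.2.2.2 j.1)) b
  rw [show dpr p (fun ω => (G₁ (M ω) (fun j => Xs j ω) (fun j => Ss j ω)
        (fun j => Ys j.1 ω) (fun j => Zs j.1 ω), Ys κ ω, Zs κ ω)) (b, y, z) = _ from h1,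
      show dpr p (fun ω => G₁ (M ω) (fun j => Xs j ω) (fun j => Ss j ω)
        (fun j => Ys j.1 ω) (fun j => Zs j.1 ω)) b = _ from h2]
  simp only [Fintype.sum_prod_type]
  simp only [hMem]
  rw [Finset.sum_mul]
  refine Finset.sum_congr rfl fun m _ => ?_
  rw [Finset.sum_mul]
  refine Finset.sum_congr rfl fun xs _ => ?_
  rw [Finset.sum_mul]
  refine Finset.sum_congr rfl fun ss _ => ?_
  -- reindex the (ys, zs) sums
  set eY := Equiv.funSplitAt κ 𝒴 with heY
  set eZ := Equiv.funSplitAt κ 𝒵 with heZ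
  have reindex : ∀ f : (Fin n → 𝒴) → (Fin n → 𝒵) → ℝ,
      (∑ ys, ∑ zs, f ys zs)
        = ∑ ys' : {j : Fin n // j ≠ κ} → 𝒴, ∑ zs' : {j : Fin n // j ≠ κ} → 𝒵, ∑ yk : 𝒴, ∑ zk : 𝒵,
            f (eY.symm (yk, ys')) (eZ.symm (zk, zs')) := by
    intro f
    rw [← Equiv.sum_comp eY.symm (fun ys => ∑ zs, f ys zs), Fintype.sum_prod_type,
      Finset.sum_comm]
    refine Finset.sum_congr rfl fun ys' _ => ?_
    rw [Finset.sum_comm, ← Equiv.sum_comp eZ.symm (fun zs => ∑ yk, f (eY.symm (yk, ys')) zs),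
      Fintype.sum_prod_type, Finset.sum_comm]
    refine Finset.sum_congr rfl fun zs' _ => ?_
    rw [Finset.sum_comm]
  rw [reindex, reindex]
  have hYr : ∀ (yk : 𝒴) (ys' : {j : Fin n // j ≠ κ} → 𝒴),
      (fun j : {j : Fin n // j ≠ κ} => (eY.symm (yk, ys')) j.1) = ys' := by
    intro yk ys'; funext j
    simp only [heY, Equiv.funSplitAt_symm_apply]
    rw [dif_neg j.2, Subtype.coe_eta]
  have hZr : ∀ (zk : 𝒵) (zs' : {j : Fin n // j ≠ κ} → 𝒵),
      (fun j : {j : Fin n // j ≠ κ} => (eZ.symm (zk, zs')) j.1) = zs' := by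
    intro zk zs'; funext j
    simp only [heZ, Equiv.funSplitAt_symm_apply]
    rw [dif_neg j.2, Subtype.coe_eta]
  have hYat : ∀ (yk : 𝒴) (ys' : {j : Fin n // j ≠ κ} → 𝒴), (eY.symm (yk, ys')) κ = yk := by
    intro yk ys'; simp [heY, Equiv.funSplitAt_symm_apply]
  have hZat : ∀ (zk : 𝒵) (zs' : {j : Fin n // j ≠ κ} → 𝒵), (eZ.symm (zk, zs')) κ = zk := by
    intro zk zs'; simp [heZ, Equiv.funSplitAt_symm_apply]
  have hprod : ∀ (yk : 𝒴) (ys' : {j : Fin n // j ≠ κ} → 𝒴) (zk : 𝒵)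
      (zs' : {j : Fin n // j ≠ κ} → 𝒵),
      (∏ i, Q (xs i) (ss i) ((eY.symm (yk, ys')) i, (eZ.symm (zk, zs')) i))
        = Q (xs κ) (ss κ) (yk, zk)
          * ∏ j : {j : Fin n // j ≠ κ}, Q (xs j.1) (ss j.1) (ys' j, zs' j) := by
    intro yk ys' zk zs'
    rw [prod_split κ]
    rw [hYat, hZat]
    congr 1
    refine Finset.prod_congr rfl fun j _ => ?_
    simp only [heY, heZ, Equiv.funSplitAt_symm_apply]
    rw [dif_neg j.2, dif_neg j.2, Subtype.coe_eta]
  simp only [hYr, hZr, hYat, hZat, hprod]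
  rw [Finset.sum_mul]
  refine Finset.sum_congr rfl fun ys' _ => ?_
  rw [Finset.sum_mul]
  refine Finset.sum_congr rfl fun zs' _ => ?_
  by_cases hA : G₁ m xs ss ys' zs' = b
  · obtain ⟨hx, hs⟩ := hbx m xs ss ys' zs' hA
    simp only [hA, hx, hs, if_pos, Prod.mk.injEq, true_and]
    -- LHS: ∑ yk, ∑ zk, if yk = y ∧ zk = z then ν * (Q x s (yk,zk) * P') else 0
    -- RHS: (∑ yk, ∑ zk, ν * (Q x s (yk,zk) * P')) * Q x s (y,z)
    simp only [ite_and, Finset.sum_ite_irrel, Finset.sum_const_zero, Finset.sum_ite_eq',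
      Finset.mem_univ, if_true]
    simp only [show ∀ a bb c : ℝ, a * (bb * c) = a * c * bb from fun a bb c => by ring]
    simp only [← Finset.mul_sum]
    rw [← Fintype.sum_prod_type, hQ x s, mul_one]
  · simp [hA, Prod.mk.injEq]
end Key
section Core
open Finset

lemma core_ineq {Ω ℳ 𝒳 𝒮 𝒴 𝒵 𝒲 𝒟 : Type} [Fintype Ω] [Fintype ℳ] [Fintype 𝒳] [Fintype 𝒮]
    [Fintype 𝒴] [Fintype 𝒵] [Fintype 𝒲] [Fintype 𝒟]
    {n : ℕ} (p : Ω → ℝ) (hp : IsPMF p)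
    (Q : 𝒳 → 𝒮 → 𝒴 × 𝒵 → ℝ) (hQ1 : ∀ x s, ∑ yz, Q x s yz = 1)
    (M : Ω → ℳ) (Xs : Fin n → Ω → 𝒳) (Ss : Fin n → Ω → 𝒮)
    (Ys : Fin n → Ω → 𝒴) (Zs : Fin n → Ω → 𝒵)
    (hLN : ∀ (𝒰 : Type) (_ : Fintype 𝒰) (w : 𝒰 × 𝒳 → ℝ),
      ((∀ ux, 0 ≤ w ux) ∧ ∑ ux, w ux = 1) → ∀ s : 𝒮,
        dI (Ω := 𝒰 × 𝒳 × (𝒴 × 𝒵)) (fun q => w (q.1, q.2.1) * Q q.2.1 s q.2.2)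
            (fun q => q.1) (fun q => q.2.2.1)
        ≥ dI (Ω := 𝒰 × 𝒳 × (𝒴 × 𝒵)) (fun q => w (q.1, q.2.1) * Q q.2.1 s q.2.2)
            (fun q => q.1) (fun q => q.2.2.2))
    (hMem : ∀ (m : ℳ) (xs : Fin n → 𝒳) (ss : Fin n → 𝒮) (ys : Fin n → 𝒴) (zs : Fin n → 𝒵),
      dpr p (fun ω => (M ω, (fun i => Xs i ω), (fun i => Ss i ω),
                        (fun i => Ys i ω), (fun i => Zs i ω))) (m, xs, ss, ys, zs)
        = dpr p (fun ω => (M ω, (fun i => Xs i ω), (fun i => Ss i ω))) (m, xs, ss)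
            * ∏ i, Q (xs i) (ss i) (ys i, zs i))
    (κ : Fin n) (W : Ω → 𝒲) (D : Ω → 𝒟) (σ : 𝒟 → 𝒮)
    (G₁ : ℳ → (Fin n → 𝒳) → (Fin n → 𝒮) → ({j : Fin n // j ≠ κ} → 𝒴)
      → ({j : Fin n // j ≠ κ} → 𝒵) → 𝒲 × 𝒟)
    (hG : ∀ ω, (W ω, D ω) = G₁ (M ω) (fun j => Xs j ω) (fun j => Ss j ω)
      (fun j => Ys j.1 ω) (fun j => Zs j.1 ω))
    (hGs : ∀ m xs ss ys' zs', σ ((G₁ m xs ss ys' zs').2) = ss κ) :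
    dCI p (Ys κ) W D ≥ dCI p (Zs κ) W D := by
  classical
  have hp1 := hp.1
  refine dCI_compare hp1 (Ys κ) (Zs κ) W D ?_
  intro d hd
  -- the composite map producing ((W, X_κ), D)
  set Gp : ℳ → (Fin n → 𝒳) → (Fin n → 𝒮) → ({j : Fin n // j ≠ κ} → 𝒴)
      → ({j : Fin n // j ≠ κ} → 𝒵) → (𝒲 × 𝒳) × 𝒟 :=
    fun m xs ss ys' zs' => (((G₁ m xs ss ys' zs').1, xs κ), (G₁ m xs ss ys' zs').2) with hGp
  have hRV1 : (fun ω => ((W ω, Xs κ ω), D ω))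
      = fun ω => Gp (M ω) (fun j => Xs j ω) (fun j => Ss j ω)
          (fun j => Ys j.1 ω) (fun j => Zs j.1 ω) := by
    funext ω
    have h1 : W ω = (G₁ (M ω) (fun j => Xs j ω) (fun j => Ss j ω)
        (fun j => Ys j.1 ω) (fun j => Zs j.1 ω)).1 := congrArg Prod.fst (hG ω)
    have h2 : D ω = (G₁ (M ω) (fun j => Xs j ω) (fun j => Ss j ω)
        (fun j => Ys j.1 ω) (fun j => Zs j.1 ω)).2 := congrArg Prod.snd (hG ω)
    rw [hGp, h1, h2]
  -- conditional pmf of (W, X_κ) given D = d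
  set T2 : Ω → 𝒲 × 𝒳 := fun ω => (W ω, Xs κ ω) with hT2
  set wd : 𝒲 × 𝒳 → ℝ := condp p T2 D d with hwd
  set s : 𝒮 := σ d with hs
  -- factorization
  have hstar : ∀ (u : 𝒲) (x : 𝒳) (yz : 𝒴 × 𝒵),
      dpr p (fun ω => ((W ω, Xs κ ω, (Ys κ ω, Zs κ ω)), D ω)) ((u, x, yz), d)
      = dpr p (fun ω => ((W ω, Xs κ ω), D ω)) ((u, x), d) * Q x s yz := by
    intro u x yz
    have hbx : ∀ m xs ss ys' zs', Gp m xs ss ys' zs' = ((u, x), d) → xs κ = x ∧ ss κ = s := by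
      intro m xs ss ys' zs' h
      constructor
      · exact congrArg (fun t => t.1.2) h
      · have h2 : (G₁ m xs ss ys' zs').2 = d := congrArg Prod.snd h
        rw [hs, ← h2, hGs]
    have hkey := key_fact p Q hQ1 M Xs Ss Ys Zs
      (fun m xs ss => dpr p (fun ω => (M ω, (fun i => Xs i ω), (fun i => Ss i ω))) (m, xs, ss))
      (fun m xs ss ys zs => hMem m xs ss ys zs) κ Gp ((u, x), d) x s hbx yz.1 yz.2
    have g5inj : Function.Injective
        (fun t : ((𝒲 × 𝒳) × 𝒟) × 𝒴 × 𝒵 => ((t.1.1.1, t.1.1.2, (t.2.1, t.2.2)), t.1.2)) := by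
      intro t t' h
      simp only [Prod.mk.injEq] at h
      obtain ⟨⟨e1, e2, e3, e4⟩, e5⟩ := h
      exact Prod.ext (Prod.ext (Prod.ext e1 e2) e5) (Prod.ext e3 e4)
    have hfun : (fun ω => ((W ω, Xs κ ω, (Ys κ ω, Zs κ ω)), D ω))
        = fun ω => (fun t : ((𝒲 × 𝒳) × 𝒟) × 𝒴 × 𝒵 => ((t.1.1.1, t.1.1.2, (t.2.1, t.2.2)), t.1.2))
            ((Gp (M ω) (fun j => Xs j ω) (fun j => Ss j ω) (fun j => Ys j.1 ω)
                (fun j => Zs j.1 ω), Ys κ ω, Zs κ ω)) := by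
      funext ω
      rw [← congrFun hRV1 ω]
    calc dpr p (fun ω => ((W ω, Xs κ ω, (Ys κ ω, Zs κ ω)), D ω)) ((u, x, yz), d)
        = dpr p (fun ω => (fun t : ((𝒲 × 𝒳) × 𝒟) × 𝒴 × 𝒵 =>
              ((t.1.1.1, t.1.1.2, (t.2.1, t.2.2)), t.1.2))
            ((Gp (M ω) (fun j => Xs j ω) (fun j => Ss j ω) (fun j => Ys j.1 ω)
              (fun j => Zs j.1 ω), Ys κ ω, Zs κ ω)))
          ((fun t : ((𝒲 × 𝒳) × 𝒟) × 𝒴 × 𝒵 => ((t.1.1.1, t.1.1.2, (t.2.1, t.2.2)), t.1.2))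
            ((((u, x), d), yz.1, yz.2))) := by rw [← hfun]
      _ = dpr p (fun ω => (Gp (M ω) (fun j => Xs j ω) (fun j => Ss j ω) (fun j => Ys j.1 ω)
              (fun j => Zs j.1 ω), Ys κ ω, Zs κ ω)) ((((u, x), d), yz.1, yz.2)) :=
          dpr_comp_inj g5inj _ _
      _ = dpr p (fun ω => Gp (M ω) (fun j => Xs j ω) (fun j => Ss j ω) (fun j => Ys j.1 ω)
              (fun j => Zs j.1 ω)) ((u, x), d) * Q x s (yz.1, yz.2) := hkey
      _ = dpr p (fun ω => ((W ω, Xs κ ω), D ω)) ((u, x), d) * Q x s yz := by rw [← hRV1]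
  -- the conditional distribution equals the product pmf
  set T4 : Ω → 𝒲 × 𝒳 × (𝒴 × 𝒵) := fun ω => (W ω, Xs κ ω, (Ys κ ω, Zs κ ω)) with hT4
  have hρfun : (fun q : 𝒲 × 𝒳 × (𝒴 × 𝒵) => wd (q.1, q.2.1) * Q q.2.1 s q.2.2)
      = condp p T4 D d := by
    funext q
    show wd (q.1, q.2.1) * Q q.2.1 s q.2.2 = dpr p (fun ω => (T4 ω, D ω)) (q, d) / dpr p D d
    rw [show dpr p (fun ω => (T4 ω, D ω)) (q, d)
        = dpr p (fun ω => ((W ω, Xs κ ω, (Ys κ ω, Zs κ ω)), D ω)) ((q.1, q.2.1, q.2.2), d)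
      from rfl]
    rw [hstar q.1 q.2.1 q.2.2]
    rw [hwd, hT2, condp]
    rw [div_mul_eq_mul_div]
  -- pmf facts for wd
  have hwpmf : (∀ ux, 0 ≤ wd ux) ∧ ∑ ux, wd ux = 1 :=
    ⟨fun ux => condp_nonneg hp1 T2 D d ux, condp_sum T2 D d hd⟩
  have hLNs := hLN 𝒲 inferInstance wd hwpmf s
  -- rewrite both dI's in terms of entf ∘ condp
  have m1 : dpr (condp p T4 D d) (fun q : 𝒲 × 𝒳 × (𝒴 × 𝒵) => q.1) = condp p W D d := by
    funext u
    exact (condp_comp (p := p) T4 D (fun q => q.1) d u).symm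
  have m2 : dpr (condp p T4 D d) (fun q : 𝒲 × 𝒳 × (𝒴 × 𝒵) => q.2.2.1) = condp p (Ys κ) D d := by
    funext v
    exact (condp_comp (p := p) T4 D (fun q => q.2.2.1) d v).symm
  have m2' : dpr (condp p T4 D d) (fun q : 𝒲 × 𝒳 × (𝒴 × 𝒵) => q.2.2.2) = condp p (Zs κ) D d := by
    funext v
    exact (condp_comp (p := p) T4 D (fun q => q.2.2.2) d v).symm
  have m3 : dpr (condp p T4 D d) (fun q : 𝒲 × 𝒳 × (𝒴 × 𝒵) => (q.1, q.2.2.1))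
      = condp p (fun ω => (W ω, Ys κ ω)) D d := by
    funext v
    exact (condp_comp (p := p) T4 D (fun q => (q.1, q.2.2.1)) d v).symm
  have m3' : dpr (condp p T4 D d) (fun q : 𝒲 × 𝒳 × (𝒴 × 𝒵) => (q.1, q.2.2.2))
      = condp p (fun ω => (W ω, Zs κ ω)) D d := by
    funext v
    exact (condp_comp (p := p) T4 D (fun q => (q.1, q.2.2.2)) d v).symm
  have e1 : dI (Ω := 𝒲 × 𝒳 × (𝒴 × 𝒵)) (fun q => wd (q.1, q.2.1) * Q q.2.1 s q.2.2)
        (fun q => q.1) (fun q => q.2.2.1)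
      = entf (condp p W D d) + entf (condp p (Ys κ) D d)
        - entf (condp p (fun ω => (W ω, Ys κ ω)) D d) := by
    rw [hρfun]
    show entf (dpr (condp p T4 D d) (fun q => q.1))
        + entf (dpr (condp p T4 D d) (fun q => q.2.2.1))
        - entf (dpr (condp p T4 D d) (fun q => (q.1, q.2.2.1))) = _
    rw [m1, m2, m3]
  have e2 : dI (Ω := 𝒲 × 𝒳 × (𝒴 × 𝒵)) (fun q => wd (q.1, q.2.1) * Q q.2.1 s q.2.2)
        (fun q => q.1) (fun q => q.2.2.2)
      = entf (condp p W D d) + entf (condp p (Zs κ) D d)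
        - entf (condp p (fun ω => (W ω, Zs κ ω)) D d) := by
    rw [hρfun]
    show entf (dpr (condp p T4 D d) (fun q => q.1))
        + entf (dpr (condp p T4 D d) (fun q => q.2.2.2))
        - entf (dpr (condp p T4 D d) (fun q => (q.1, q.2.2.2))) = _
    rw [m1, m2', m3']
  have sw1 : entf (condp p (fun ω => (W ω, Ys κ ω)) D d)
      = entf (condp p (fun ω => (Ys κ ω, W ω)) D d) := by
    exact entf_condp_comp (fun ω => (Ys κ ω, W ω)) D Prod.swap_injective d
  have sw2 : entf (condp p (fun ω => (W ω, Zs κ ω)) D d)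
      = entf (condp p (fun ω => (Zs κ ω, W ω)) D d) := by
    exact entf_condp_comp (fun ω => (Zs κ ω, W ω)) D Prod.swap_injective d
  rw [e1, e2] at hLNs
  linarith [hLNs]
end Core
section Aux
open Finset

lemma recomb_inj {Y E C' : Type*} {I : ℕ} (kf : Fin I) {emb : Y → E}
    (hemb : Function.Injective emb) :
    Function.Injective (fun q : Y × (C' × ({j : Fin I // j ≠ kf} → E)) =>
      ((fun j => if h : j = kf then emb q.1 else q.2.2 ⟨j, h⟩ : Fin I → E), q.2.1)) := by
  intro q q' h
  simp only [Prod.mk.injEq] at h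
  obtain ⟨hfun, hc⟩ := h
  have hy : emb q.1 = emb q'.1 := by
    have := congrFun hfun kf
    rwa [dif_pos rfl, dif_pos rfl] at this
  have hv : q.2.2 = q'.2.2 := by
    funext j
    have := congrFun hfun j.1
    rwa [dif_neg j.2, dif_neg j.2] at this
  exact Prod.ext (hemb hy) (Prod.ext hc hv)

lemma recomb_inj3 {Y E C' Wt : Type*} {I : ℕ} (kf : Fin I) {emb : Y → E}
    (hemb : Function.Injective emb) :
    Function.Injective (fun q : Y × Wt × (C' × ({j : Fin I // j ≠ kf} → E)) =>
      ((fun j => if h : j = kf then emb q.1 else q.2.2.2 ⟨j, h⟩ : Fin I → E), q.2.1, q.2.2.1)) := by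
  intro q q' h
  simp only [Prod.mk.injEq] at h
  obtain ⟨hfun, hw, hc⟩ := h
  have hy : emb q.1 = emb q'.1 := by
    have := congrFun hfun kf
    rwa [dif_pos rfl, dif_pos rfl] at this
  have hv : q.2.2.2 = q'.2.2.2 := by
    funext j
    have := congrFun hfun j.1
    rwa [dif_neg j.2, dif_neg j.2] at this
  exact Prod.ext (hemb hy) (Prod.ext hw (Prod.ext hc hv))

lemma dH_pair_left {Ω α α' ρ : Type*} [Fintype Ω] [Fintype α] [Fintype α'] [Fintype ρ]
    (p : Ω → ℝ) {g : α → α'} (hg : Function.Injective g) (X : Ω → α) (R : Ω → ρ) :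
    dH p (fun ω => (g (X ω), R ω)) = dH p (fun ω => (X ω, R ω)) := by
  have hinj : Function.Injective (fun q : α × ρ => (g q.1, q.2)) := by
    intro q q' h; simp only [Prod.mk.injEq] at h; exact Prod.ext (hg h.1) h.2
  exact dH_comp_inj hinj (fun ω => (X ω, R ω))

lemma main_aux {Ω ℳ 𝒳 𝒮 𝒴 𝒵 𝒲 : Type} [Fintype Ω] [Fintype ℳ] [Fintype 𝒳] [Fintype 𝒮]
    [Fintype 𝒴] [Fintype 𝒵] [Fintype 𝒲]
    {n : ℕ} (p : Ω → ℝ) (hp : IsPMF p)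
    (Q : 𝒳 → 𝒮 → 𝒴 × 𝒵 → ℝ) (hQ1 : ∀ x s, ∑ yz, Q x s yz = 1)
    (M : Ω → ℳ) (Xs : Fin n → Ω → 𝒳) (Ss : Fin n → Ω → 𝒮)
    (Ys : Fin n → Ω → 𝒴) (Zs : Fin n → Ω → 𝒵)
    (hLN : ∀ (𝒰 : Type) (_ : Fintype 𝒰) (w : 𝒰 × 𝒳 → ℝ),
      ((∀ ux, 0 ≤ w ux) ∧ ∑ ux, w ux = 1) → ∀ s : 𝒮,
        dI (Ω := 𝒰 × 𝒳 × (𝒴 × 𝒵)) (fun q => w (q.1, q.2.1) * Q q.2.1 s q.2.2)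
            (fun q => q.1) (fun q => q.2.2.1)
        ≥ dI (Ω := 𝒰 × 𝒳 × (𝒴 × 𝒵)) (fun q => w (q.1, q.2.1) * Q q.2.1 s q.2.2)
            (fun q => q.1) (fun q => q.2.2.2))
    (hMem : ∀ (m : ℳ) (xs : Fin n → 𝒳) (ss : Fin n → 𝒮) (ys : Fin n → 𝒴) (zs : Fin n → 𝒵),
      dpr p (fun ω => (M ω, (fun i => Xs i ω), (fun i => Ss i ω),
                        (fun i => Ys i ω), (fun i => Zs i ω))) (m, xs, ss, ys, zs)
        = dpr p (fun ω => (M ω, (fun i => Xs i ω), (fun i => Ss i ω))) (m, xs, ss)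
            * ∏ i, Q (xs i) (ss i) (ys i, zs i))
    (i : Fin n) (W : Ω → 𝒲)
    (F : ℳ → (Fin n → 𝒳) → (Fin n → 𝒮) → 𝒴 → 𝒵 → 𝒲)
    (hWF : ∀ ω, W ω = F (M ω) (fun j => Xs j ω) (fun j => Ss j ω) (Ys i ω) (Zs i ω)) :
    dCI p (fun ω => fun j : Fin i.val => Ys ⟨j.val, j.isLt.trans i.isLt⟩ ω) W
        (fun ω => (M ω, fun j => Ss j ω))
      ≥ dCI p (fun ω => fun j : Fin i.val => Zs ⟨j.val, j.isLt.trans i.isLt⟩ ω) W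
        (fun ω => (M ω, fun j => Ss j ω)) := by
  classical
  set C : Ω → ℳ × (Fin n → 𝒮) := fun ω => (M ω, fun j => Ss j ω) with hC
  set hyb : ℕ → Ω → (Fin i.val → 𝒴 ⊕ 𝒵) := fun t ω j =>
    if j.val < t then Sum.inl (Ys ⟨j.val, j.isLt.trans i.isLt⟩ ω)
    else Sum.inr (Zs ⟨j.val, j.isLt.trans i.isLt⟩ ω) with hhyb
  set A : ℕ → ℝ := fun t => dCI p (hyb t) W C with hA
  -- step inequality
  have step : ∀ k, k < i.val → A k ≤ A (k + 1) := by
    intro k hk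
    set kf : Fin i.val := ⟨k, hk⟩ with hkf
    set kn : Fin n := ⟨k, hk.trans i.isLt⟩ with hkn
    set Vk : Ω → ({j : Fin i.val // j ≠ kf} → 𝒴 ⊕ 𝒵) := fun ω j =>
      if j.1.val < k then Sum.inl (Ys ⟨j.1.val, j.1.isLt.trans i.isLt⟩ ω)
      else Sum.inr (Zs ⟨j.1.val, j.1.isLt.trans i.isLt⟩ ω) with hVk
    set DD : Ω → (ℳ × (Fin n → 𝒮)) × ({j : Fin i.val // j ≠ kf} → 𝒴 ⊕ 𝒵) :=
      fun ω => (C ω, Vk ω) with hDD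
    -- core inequality via less noisy
    have hine : (i : Fin n) ≠ kn := by
      intro h
      have := congrArg Fin.val h
      simp only [hkn] at this
      omega
    have hjn : ∀ j : {j : Fin i.val // j ≠ kf}, j.1.val < n :=
      fun j => j.1.isLt.trans i.isLt
    have hne : ∀ j : {j : Fin i.val // j ≠ kf}, (⟨j.1.val, hjn j⟩ : Fin n) ≠ kn := by
      intro j h
      have hval := congrArg Fin.val h
      exact j.2 (Fin.ext hval)
    have hcore : dCI p (Ys kn) W DD ≥ dCI p (Zs kn) W DD := by
      refine core_ineq p hp Q hQ1 M Xs Ss Ys Zs hLN hMem kn W DD (fun dd => dd.1.2 kn)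
        (fun m xs ss ys' zs' =>
          (F m xs ss (ys' ⟨i, hine⟩) (zs' ⟨i, hine⟩),
            ((m, ss), fun j => if j.1.val < k
              then Sum.inl (ys' ⟨⟨j.1.val, hjn j⟩, hne j⟩)
              else Sum.inr (zs' ⟨⟨j.1.val, hjn j⟩, hne j⟩))))
        ?_ ?_
      · intro ω
        rw [hWF ω]
      · intro m xs ss ys' zs'
        rfl
    -- structure of the hybrids
    have hh1 : ∀ ω, hyb (k + 1) ω
        = (fun j => if h : j = kf then Sum.inl (Ys kn ω) else Vk ω ⟨j, h⟩) := by
      intro ω; funext j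
      by_cases hj : j = kf
      · subst hj
        rw [dif_pos rfl, hhyb]
        show (if (k < k + 1) then _ else _) = _
        rw [if_pos (Nat.lt_succ_self k)]
      · rw [dif_neg hj, hhyb, hVk]
        have hvne : j.val ≠ k := fun h => hj (Fin.ext h)
        have hiff : (j.val < k + 1) ↔ (j.val < k) := by omega
        exact if_congr hiff rfl rfl
    have hh0 : ∀ ω, hyb k ω
        = (fun j => if h : j = kf then Sum.inr (Zs kn ω) else Vk ω ⟨j, h⟩) := by
      intro ω; funext j
      by_cases hj : j = kf
      · subst hj
        rw [dif_pos rfl, hhyb]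
        show (if (kf.val < k) then _ else _) = _
        rw [if_neg (show ¬((kf : Fin i.val).val < k) from Nat.lt_irrefl k)]
      · rw [dif_neg hj, hhyb, hVk]
    -- relabeling identities
    have ha : dH p (fun ω => (hyb (k + 1) ω, C ω)) = dH p (fun ω => (Ys kn ω, DD ω)) := by
      rw [show (fun ω => (hyb (k + 1) ω, C ω))
          = (fun ω => ((fun j => if h : j = kf then Sum.inl (Ys kn ω) else Vk ω ⟨j, h⟩ :
              Fin i.val → 𝒴 ⊕ 𝒵), C ω)) from funext fun ω => by rw [hh1 ω]]
      exact dH_comp_inj (recomb_inj kf Sum.inl_injective) (fun ω => (Ys kn ω, DD ω))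
    have haZ : dH p (fun ω => (hyb k ω, C ω)) = dH p (fun ω => (Zs kn ω, DD ω)) := by
      rw [show (fun ω => (hyb k ω, C ω))
          = (fun ω => ((fun j => if h : j = kf then Sum.inr (Zs kn ω) else Vk ω ⟨j, h⟩ :
              Fin i.val → 𝒴 ⊕ 𝒵), C ω)) from funext fun ω => by rw [hh0 ω]]
      exact dH_comp_inj (recomb_inj kf Sum.inr_injective) (fun ω => (Zs kn ω, DD ω))
    have hb : dH p (fun ω => (hyb (k + 1) ω, W ω, C ω))
        = dH p (fun ω => (Ys kn ω, W ω, DD ω)) := by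
      rw [show (fun ω => (hyb (k + 1) ω, W ω, C ω))
          = (fun ω => ((fun j => if h : j = kf then Sum.inl (Ys kn ω) else Vk ω ⟨j, h⟩ :
              Fin i.val → 𝒴 ⊕ 𝒵), W ω, C ω)) from funext fun ω => by rw [hh1 ω]]
      exact dH_comp_inj (recomb_inj3 kf Sum.inl_injective) (fun ω => (Ys kn ω, W ω, DD ω))
    have hbZ : dH p (fun ω => (hyb k ω, W ω, C ω))
        = dH p (fun ω => (Zs kn ω, W ω, DD ω)) := by
      rw [show (fun ω => (hyb k ω, W ω, C ω))
          = (fun ω => ((fun j => if h : j = kf then Sum.inr (Zs kn ω) else Vk ω ⟨j, h⟩ :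
              Fin i.val → 𝒴 ⊕ 𝒵), W ω, C ω)) from funext fun ω => by rw [hh0 ω]]
      exact dH_comp_inj (recomb_inj3 kf Sum.inr_injective) (fun ω => (Zs kn ω, W ω, DD ω))
    have hstep : A (k + 1) - A k = dCI p (Ys kn) W DD - dCI p (Zs kn) W DD := by
      rw [hA]
      show (dH p (fun ω => (hyb (k + 1) ω, C ω)) + dH p (fun ω => (W ω, C ω)) - dH p C
            - dH p (fun ω => (hyb (k + 1) ω, W ω, C ω)))
          - (dH p (fun ω => (hyb k ω, C ω)) + dH p (fun ω => (W ω, C ω)) - dH p C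
            - dH p (fun ω => (hyb k ω, W ω, C ω)))
          = (dH p (fun ω => (Ys kn ω, DD ω)) + dH p (fun ω => (W ω, DD ω)) - dH p DD
            - dH p (fun ω => (Ys kn ω, W ω, DD ω)))
          - (dH p (fun ω => (Zs kn ω, DD ω)) + dH p (fun ω => (W ω, DD ω)) - dH p DD
            - dH p (fun ω => (Zs kn ω, W ω, DD ω)))
      rw [ha, haZ, hb, hbZ]
      ring
    linarith [hcore, hstep]
  -- telescoping
  have mono : ∀ k, k ≤ i.val → A 0 ≤ A k := by
    intro k
    induction k with
    | zero => intro _; exact le_refl _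
    | succ k ih =>
      intro hk1
      have hk : k < i.val := Nat.lt_of_succ_le hk1
      exact le_trans (ih (Nat.le_of_lt hk)) (step k hk)
  -- endpoints
  have htop : A i.val
      = dCI p (fun ω => fun j : Fin i.val => Ys ⟨j.val, j.isLt.trans i.isLt⟩ ω) W C := by
    rw [hA]
    have hfun : ∀ ω, hyb i.val ω
        = (fun v : Fin i.val → 𝒴 => fun j => (Sum.inl (v j) : 𝒴 ⊕ 𝒵))
            (fun j : Fin i.val => Ys ⟨j.val, j.isLt.trans i.isLt⟩ ω) := by
      intro ω; funext j
      rw [hhyb]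
      show (if (j.val < i.val) then _ else _) = _
      rw [if_pos j.isLt]
    have hinj : Function.Injective (fun v : Fin i.val → 𝒴 => fun j => (Sum.inl (v j) : 𝒴 ⊕ 𝒵)) := by
      intro v v' h
      funext j
      exact Sum.inl_injective (congrFun h j)
    show dH p (fun ω => (hyb i.val ω, C ω)) + dH p (fun ω => (W ω, C ω)) - dH p C
        - dH p (fun ω => (hyb i.val ω, W ω, C ω)) = _
    rw [show (fun ω => (hyb i.val ω, C ω)) = (fun ω => ((fun v : Fin i.val → 𝒴 =>
        fun j => (Sum.inl (v j) : 𝒴 ⊕ 𝒵)) (fun j : Fin i.val => Ys ⟨j.val, j.isLt.trans i.isLt⟩ ω),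
        C ω)) from funext fun ω => by rw [hfun ω]]
    rw [show (fun ω => (hyb i.val ω, W ω, C ω)) = (fun ω => ((fun v : Fin i.val → 𝒴 =>
        fun j => (Sum.inl (v j) : 𝒴 ⊕ 𝒵)) (fun j : Fin i.val => Ys ⟨j.val, j.isLt.trans i.isLt⟩ ω),
        W ω, C ω)) from funext fun ω => by rw [hfun ω]]
    rw [dH_pair_left p hinj (fun ω => fun j : Fin i.val => Ys ⟨j.val, j.isLt.trans i.isLt⟩ ω) C]
    rw [show dH p (fun ω => ((fun v : Fin i.val → 𝒴 => fun j => (Sum.inl (v j) : 𝒴 ⊕ 𝒵))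
          (fun j : Fin i.val => Ys ⟨j.val, j.isLt.trans i.isLt⟩ ω), W ω, C ω))
        = dH p (fun ω => ((fun j : Fin i.val => Ys ⟨j.val, j.isLt.trans i.isLt⟩ ω), W ω, C ω))
      from dH_pair_left p hinj (fun ω => fun j : Fin i.val => Ys ⟨j.val, j.isLt.trans i.isLt⟩ ω)
        (fun ω => (W ω, C ω))]
    rfl
  have hbot : A 0
      = dCI p (fun ω => fun j : Fin i.val => Zs ⟨j.val, j.isLt.trans i.isLt⟩ ω) W C := by
    rw [hA]
    have hfun : ∀ ω, hyb 0 ω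
        = (fun v : Fin i.val → 𝒵 => fun j => (Sum.inr (v j) : 𝒴 ⊕ 𝒵))
            (fun j : Fin i.val => Zs ⟨j.val, j.isLt.trans i.isLt⟩ ω) := by
      intro ω; funext j
      rw [hhyb]
      show (if (j.val < 0) then _ else _) = _
      rw [if_neg (by omega)]
    have hinj : Function.Injective (fun v : Fin i.val → 𝒵 => fun j => (Sum.inr (v j) : 𝒴 ⊕ 𝒵)) := by
      intro v v' h
      funext j
      exact Sum.inr_injective (congrFun h j)
    show dH p (fun ω => (hyb 0 ω, C ω)) + dH p (fun ω => (W ω, C ω)) - dH p C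
        - dH p (fun ω => (hyb 0 ω, W ω, C ω)) = _
    rw [show (fun ω => (hyb 0 ω, C ω)) = (fun ω => ((fun v : Fin i.val → 𝒵 =>
        fun j => (Sum.inr (v j) : 𝒴 ⊕ 𝒵)) (fun j : Fin i.val => Zs ⟨j.val, j.isLt.trans i.isLt⟩ ω),
        C ω)) from funext fun ω => by rw [hfun ω]]
    rw [show (fun ω => (hyb 0 ω, W ω, C ω)) = (fun ω => ((fun v : Fin i.val → 𝒵 =>
        fun j => (Sum.inr (v j) : 𝒴 ⊕ 𝒵)) (fun j : Fin i.val => Zs ⟨j.val, j.isLt.trans i.isLt⟩ ω),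
        W ω, C ω)) from funext fun ω => by rw [hfun ω]]
    rw [dH_pair_left p hinj (fun ω => fun j : Fin i.val => Zs ⟨j.val, j.isLt.trans i.isLt⟩ ω) C]
    rw [show dH p (fun ω => ((fun v : Fin i.val → 𝒵 => fun j => (Sum.inr (v j) : 𝒴 ⊕ 𝒵))
          (fun j : Fin i.val => Zs ⟨j.val, j.isLt.trans i.isLt⟩ ω), W ω, C ω))
        = dH p (fun ω => ((fun j : Fin i.val => Zs ⟨j.val, j.isLt.trans i.isLt⟩ ω), W ω, C ω))
      from dH_pair_left p hinj (fun ω => fun j : Fin i.val => Zs ⟨j.val, j.isLt.trans i.isLt⟩ ω)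
        (fun ω => (W ω, C ω))]
    rfl
  have := mono i.val (le_refl _)
  rw [htop, hbot] at this
  exact this
end Aux


/-- Less noisy lemma with side information. -/
theorem less_noisy_lemma_with_SI {Ω ℳ 𝒳 𝒮 𝒴 𝒵 : Type}
    [Fintype Ω] [Fintype ℳ] [Fintype 𝒳] [Fintype 𝒮] [Fintype 𝒴] [Fintype 𝒵]
    (n : ℕ) (p : Ω → ℝ) (hp : IsPMF p)
    -- the single-letter channel p(y,z | x, s) and the side-information marginal p_S
    (Q : 𝒳 → 𝒮 → 𝒴 × 𝒵 → ℝ) (hQ : ∀ x s, (∀ yz, 0 ≤ Q x s yz) ∧ ∑ yz, Q x s yz = 1)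
    (pS : 𝒮 → ℝ) (hpS : (∀ s, 0 ≤ pS s) ∧ ∑ s, pS s = 1)
    -- the n-letter random variables
    (M : Ω → ℳ) (Xs : Fin n → Ω → 𝒳) (Ss : Fin n → Ω → 𝒮)
    (Ys : Fin n → Ω → 𝒴) (Zs : Fin n → Ω → 𝒵)
    -- `Y` is less noisy than `Z` given the side information:
    -- I(U;Y|S=s) ≥ I(U;Z|S=s) for every s and every p(u)p(x|u) (i.e. every joint pmf w on U×X)
    (hLN : ∀ (𝒰 : Type) (_ : Fintype 𝒰) (w : 𝒰 × 𝒳 → ℝ),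
      ((∀ ux, 0 ≤ w ux) ∧ ∑ ux, w ux = 1) → ∀ s : 𝒮,
        dI (Ω := 𝒰 × 𝒳 × (𝒴 × 𝒵)) (fun q => w (q.1, q.2.1) * Q q.2.1 s q.2.2)
            (fun q => q.1) (fun q => q.2.2.1)
        ≥ dI (Ω := 𝒰 × 𝒳 × (𝒴 × 𝒵)) (fun q => w (q.1, q.2.1) * Q q.2.1 s q.2.2)
            (fun q => q.1) (fun q => q.2.2.2))
    -- the channel is memoryless: p(m,xⁿ,sⁿ,yⁿ,zⁿ) = p(m,xⁿ,sⁿ) ∏ᵢ Q(yᵢ,zᵢ | xᵢ,sᵢ)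
    (hMem : ∀ (m : ℳ) (xs : Fin n → 𝒳) (ss : Fin n → 𝒮) (ys : Fin n → 𝒴) (zs : Fin n → 𝒵),
      dpr p (fun ω => (M ω, (fun i => Xs i ω), (fun i => Ss i ω),
                        (fun i => Ys i ω), (fun i => Zs i ω))) (m, xs, ss, ys, zs)
        = dpr p (fun ω => (M ω, (fun i => Xs i ω), (fun i => Ss i ω))) (m, xs, ss)
            * ∏ i, Q (xs i) (ss i) (ys i, zs i))
    -- Sⁿ is i.i.d. with marginal pS
    (hiid : ∀ ss : Fin n → 𝒮,
      dpr p (fun ω => fun i => Ss i ω) ss = ∏ i, pS (ss i)) :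
    ∀ i : Fin n,
      dCI p (fun ω => fun j : Fin i.val => Ys ⟨j.val, j.isLt.trans i.isLt⟩ ω) (Ys i)
          (fun ω => (M ω, fun j => Ss j ω))
        ≥ dCI p (fun ω => fun j : Fin i.val => Zs ⟨j.val, j.isLt.trans i.isLt⟩ ω) (Ys i)
          (fun ω => (M ω, fun j => Ss j ω))
      ∧
      dCI p (fun ω => fun j : Fin i.val => Ys ⟨j.val, j.isLt.trans i.isLt⟩ ω) (Zs i)
          (fun ω => (M ω, fun j => Ss j ω))
        ≥ dCI p (fun ω => fun j : Fin i.val => Zs ⟨j.val, j.isLt.trans i.isLt⟩ ω) (Zs i)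
          (fun ω => (M ω, fun j => Ss j ω)) := by
  intro i
  constructor
  · exact main_aux p hp Q (fun x s => (hQ x s).2) M Xs Ss Ys Zs hLN hMem i (Ys i)
      (fun _ _ _ y _ => y) (fun ω => rfl)
  · exact main_aux p hp Q (fun x s => (hQ x s).2) M Xs Ss Ys Zs hLN hMem i (Zs i)
      (fun _ _ _ _ z => z) (fun ω => rfl)
end

section
/- In the converse for the 3-receiver less noisy broadcast channel, for any random variables with M₂, M₃ independent messages, Sⁿ i.i.d. side information independent of (M₂,M₃), and Y₂ⁿ the output: (1/n)H(M₂ | M₃, Sⁿ) ≤ ε + (1/n)∑_{i=1}^n I(V_i; Y_{2,i} | U_i, S_i) + (1/n)H(M₂ | M₃, Sⁿ, Y₂ⁿ), where U_i = (M₃, S^{i-1}, S_{i+1}^n, Y₂^{i-1}) and V_i = (M₂, M₃, Y₂^{i-1}) with ε = 0. -/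
open scoped Classical
open Finset

lemma dH_image {Ω 𝒳 : Type*} [Fintype Ω] [Fintype 𝒳] (p : Ω → ℝ) (W : Ω → 𝒳) :
    dH p W = - ∑ w ∈ Finset.image W Finset.univ,
      dpr p W w * Real.logb 2 (dpr p W w) := by
  unfold dH
  congr 1
  refine (Finset.sum_subset (Finset.subset_univ _) ?_).symm
  intro w _ hw
  have : dpr p W w = 0 := by
    unfold dpr
    refine Finset.sum_eq_zero fun ω _ => ?_
    have : W ω ≠ w := fun hc => hw (Finset.mem_image.2 ⟨ω, Finset.mem_univ _, hc⟩)
    simp [this]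
  simp [this]

lemma dH_congr' {Ω 𝒳 𝒴 : Type*} [Fintype Ω] [Fintype 𝒳] [Fintype 𝒴] (p : Ω → ℝ)
    (X : Ω → 𝒳) (Y : Ω → 𝒴) (h : ∀ ω ω', X ω = X ω' ↔ Y ω = Y ω') :
    dH p X = dH p Y := by
  rcases isEmpty_or_nonempty Ω with hE | hN
  · simp [dH, dpr]
  · set f : 𝒳 → 𝒴 := fun x =>
      if hx : ∃ ω, X ω = x then Y hx.choose else Y (Classical.arbitrary Ω) with hfdef
    have hf : ∀ ω, f (X ω) = Y ω := by
      intro ω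
      have hx : ∃ ω', X ω' = X ω := ⟨ω, rfl⟩
      rw [hfdef]
      simp only [dif_pos hx]
      exact (h _ _).mp hx.choose_spec
    have hdpr : ∀ ω, dpr p Y (f (X ω)) = dpr p X (X ω) := by
      intro ω
      unfold dpr
      refine Finset.sum_congr rfl fun ω' _ => ?_
      have : (Y ω' = f (X ω)) ↔ (X ω' = X ω) := by
        rw [hf ω]; exact (h ω' ω).symm
      simp [this]
    rw [dH_image p X, dH_image p Y]
    have himg : Finset.image Y Finset.univ = Finset.image f (Finset.image X Finset.univ) := by
      rw [Finset.image_image]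
      refine Finset.image_congr fun ω _ => (hf ω).symm
    have hinj : ∀ x ∈ Finset.image X Finset.univ, ∀ x' ∈ Finset.image X Finset.univ,
        f x = f x' → x = x' := by
      intro x hx x' hx' hfe
      obtain ⟨ω, _, rfl⟩ := Finset.mem_image.1 hx
      obtain ⟨ω', _, rfl⟩ := Finset.mem_image.1 hx'
      rw [hf, hf] at hfe
      exact (h ω ω').mpr hfe
    have hsum : ∑ y ∈ Finset.image f (Finset.image X Finset.univ),
        dpr p Y y * Real.logb 2 (dpr p Y y)
        = ∑ x ∈ Finset.image X Finset.univ,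
          dpr p Y (f x) * Real.logb 2 (dpr p Y (f x)) := Finset.sum_image hinj
    rw [himg, hsum]
    congr 1
    refine Finset.sum_congr rfl fun x hx => ?_
    obtain ⟨ω, _, rfl⟩ := Finset.mem_image.1 hx
    rw [hdpr ω]

/-- single-letterization identity in the converse for the 3-receiver
less noisy BC: H(M₂|M₃,Sⁿ) − H(M₂|M₃,Sⁿ,Y₂ⁿ) = ∑ᵢ I(Vᵢ; Y₂ᵢ | Uᵢ, Sᵢ) with
Uᵢ = (M₃, S^{i-1}, S_{i+1}^n, Y₂^{i-1}) and Vᵢ = (M₂, M₃, Y₂^{i-1}). -/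
theorem single_letterization_R2 {Ω ℳ₂ ℳ₃ 𝒮 𝒴 : Type*}
    [Fintype Ω] [Fintype ℳ₂] [Fintype ℳ₃] [Fintype 𝒮] [Fintype 𝒴]
    (n : ℕ) (p : Ω → ℝ) (hp : IsPMF p)
    (M₂ : Ω → ℳ₂) (M₃ : Ω → ℳ₃) (S : Fin n → Ω → 𝒮) (Y : Fin n → Ω → 𝒴)
    (pS : 𝒮 → ℝ)
    -- the messages are independent
    (hMind : dIndep p M₂ M₃)
    -- Sⁿ is i.i.d. with marginal pS and independent of the messages
    (hiid : ∀ ss : Fin n → 𝒮, dpr p (fun ω => fun i => S i ω) ss = ∏ i, pS (ss i))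
    (hSind : dIndep p (fun ω => (M₂ ω, M₃ ω)) (fun ω => fun i => S i ω)) :
    dCH p M₂ (fun ω => (M₃ ω, fun i => S i ω))
      - dCH p M₂ (fun ω => (M₃ ω, (fun i => S i ω), (fun i => Y i ω)))
    = ∑ i : Fin n,
        dCI p
          (fun ω => (M₂ ω, M₃ ω, fun j : Fin i.val => Y ⟨j.val, j.isLt.trans i.isLt⟩ ω))
          (Y i)
          (fun ω => ((M₃ ω,
              (fun j : Fin i.val => S ⟨j.val, j.isLt.trans i.isLt⟩ ω),
              (fun j : {j : Fin n // i < j} => S j.val ω),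
              (fun j : Fin i.val => Y ⟨j.val, j.isLt.trans i.isLt⟩ ω)),
            S i ω)) := by
  classical
  set SS : Ω → Fin n → 𝒮 := fun ω j => S j ω with hSSdef
  set Yp : ℕ → Ω → Fin n → Option 𝒴 :=
    fun k ω j => if (j : ℕ) < k then some (Y j ω) else none with hYpdef
  set A : ℕ → ℝ := fun k => dH p (fun ω => (M₂ ω, M₃ ω, SS ω, Yp k ω)) with hAdef
  set B : ℕ → ℝ := fun k => dH p (fun ω => (M₃ ω, SS ω, Yp k ω)) with hBdef
  -- helper iffs
  have hS3 : ∀ (i : Fin n) (ω ω' : Ω), SS ω = SS ω' ↔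
      ((fun j : Fin i.val => S ⟨j.val, j.isLt.trans i.isLt⟩ ω)
        = (fun j : Fin i.val => S ⟨j.val, j.isLt.trans i.isLt⟩ ω')
      ∧ (fun j : {j : Fin n // i < j} => S j.val ω)
        = (fun j : {j : Fin n // i < j} => S j.val ω')
      ∧ S i ω = S i ω') := by
    intro i ω ω'
    constructor
    · intro hh
      refine ⟨funext fun j => ?_, funext fun j => ?_, ?_⟩
      · exact congrFun hh ⟨j.val, j.isLt.trans i.isLt⟩
      · exact congrFun hh j.val
      · exact congrFun hh i
    · rintro ⟨h1, h2, h3⟩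
      funext j
      rcases lt_trichotomy (j : ℕ) (i : ℕ) with hlt | heq | hgt
      · exact congrFun h1 ⟨j.val, hlt⟩
      · have hji : j = i := Fin.ext heq
        rw [hji]; exact h3
      · exact congrFun h2 ⟨j, Fin.lt_def.2 hgt⟩
  have hYpre : ∀ (i : Fin n) (ω ω' : Ω), Yp i.val ω = Yp i.val ω' ↔
      (fun j : Fin i.val => Y ⟨j.val, j.isLt.trans i.isLt⟩ ω)
        = (fun j : Fin i.val => Y ⟨j.val, j.isLt.trans i.isLt⟩ ω') := by
    intro i ω ω'
    constructor
    · intro hh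
      funext j
      have h2 := congrFun hh ⟨j.val, j.isLt.trans i.isLt⟩
      simp only [hYpdef, Fin.val_mk, if_pos j.isLt] at h2
      exact Option.some.inj h2
    · intro hh
      funext j
      simp only [hYpdef]
      by_cases hj : (j : ℕ) < i.val
      · have h2 := congrFun hh ⟨j.val, hj⟩
        simp only [Fin.val_mk] at h2
        rw [if_pos hj, if_pos hj]
        exact congrArg some h2
      · rw [if_neg hj, if_neg hj]
  have hYsucc : ∀ (i : Fin n) (ω ω' : Ω), Yp (i.val + 1) ω = Yp (i.val + 1) ω' ↔
      (Y i ω = Y i ω' ∧ Yp i.val ω = Yp i.val ω') := by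
    intro i ω ω'
    constructor
    · intro hh
      constructor
      · have h2 := congrFun hh i
        simp only [hYpdef, if_pos (Nat.lt_succ_self i.val)] at h2
        exact Option.some.inj h2
      · funext j
        simp only [hYpdef]
        by_cases hj : (j : ℕ) < i.val
        · have h2 := congrFun hh j
          simp only [hYpdef, if_pos (Nat.lt_succ_of_lt hj)] at h2
          rw [if_pos hj, if_pos hj]
          exact h2
        · rw [if_neg hj, if_neg hj]
    · rintro ⟨h1, h2⟩
      funext j
      simp only [hYpdef]
      by_cases hj : (j : ℕ) < i.val + 1
      · rw [if_pos hj, if_pos hj]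
        rcases Nat.lt_succ_iff_lt_or_eq.1 hj with hlt | heq
        · have h3 := congrFun h2 j
          simp only [hYpdef, if_pos hlt] at h3
          exact h3
        · have hji : j = i := Fin.ext heq
          rw [hji]; exact congrArg some h1
      · rw [if_neg hj, if_neg hj]
  have hYfull : ∀ (ω ω' : Ω), Yp n ω = Yp n ω' ↔
      (fun i : Fin n => Y i ω) = (fun i : Fin n => Y i ω') := by
    intro ω ω'
    constructor
    · intro hh
      funext j
      have h2 := congrFun hh j
      simp only [hYpdef, if_pos j.isLt] at h2
      exact Option.some.inj h2
    · intro hh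
      funext j
      simp only [hYpdef, if_pos j.isLt]
      exact congrArg some (congrFun hh j)
  -- LHS conversions
  have L1 : dCH p M₂ (fun ω => (M₃ ω, fun i => S i ω)) = A 0 - B 0 := by
    rw [hAdef, hBdef]
    unfold dCH
    have e1 : dH p (fun ω => (M₂ ω, (M₃ ω, fun i => S i ω)))
        = dH p (fun ω => (M₂ ω, M₃ ω, SS ω, Yp 0 ω)) := by
      refine dH_congr' p _ _ fun ω ω' => ?_
      simp only [Prod.mk.injEq, hSSdef, hYpdef]
      simp [funext_iff]
    have e2 : dH p (fun ω => (M₃ ω, fun i => S i ω))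
        = dH p (fun ω => (M₃ ω, SS ω, Yp 0 ω)) := by
      refine dH_congr' p _ _ fun ω ω' => ?_
      simp only [Prod.mk.injEq, hSSdef, hYpdef]
      simp [funext_iff]
    rw [e1, e2]
  have L2 : dCH p M₂ (fun ω => (M₃ ω, (fun i => S i ω), (fun i => Y i ω))) = A n - B n := by
    rw [hAdef, hBdef]
    unfold dCH
    have e1 : dH p (fun ω => (M₂ ω, (M₃ ω, (fun i => S i ω), (fun i => Y i ω))))
        = dH p (fun ω => (M₂ ω, M₃ ω, SS ω, Yp n ω)) := by
      refine dH_congr' p _ _ fun ω ω' => ?_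
      simp only [Prod.mk.injEq, hSSdef]
      rw [hYfull ω ω']
    have e2 : dH p (fun ω => (M₃ ω, (fun i => S i ω), (fun i => Y i ω)))
        = dH p (fun ω => (M₃ ω, SS ω, Yp n ω)) := by
      refine dH_congr' p _ _ fun ω ω' => ?_
      simp only [Prod.mk.injEq, hSSdef]
      rw [hYfull ω ω']
    rw [e1, e2]
  -- per-term identity
  have hterm : ∀ i : Fin n,
      dCI p
        (fun ω => (M₂ ω, M₃ ω, fun j : Fin i.val => Y ⟨j.val, j.isLt.trans i.isLt⟩ ω))
        (Y i)
        (fun ω => ((M₃ ω,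
            (fun j : Fin i.val => S ⟨j.val, j.isLt.trans i.isLt⟩ ω),
            (fun j : {j : Fin n // i < j} => S j.val ω),
            (fun j : Fin i.val => Y ⟨j.val, j.isLt.trans i.isLt⟩ ω)),
          S i ω))
      = (A i.val + B (i.val + 1)) - (B i.val + A (i.val + 1)) := by
    intro i
    unfold dCI
    have E1 : dH p (fun ω =>
        ((M₂ ω, M₃ ω, fun j : Fin i.val => Y ⟨j.val, j.isLt.trans i.isLt⟩ ω),
         ((M₃ ω,
            (fun j : Fin i.val => S ⟨j.val, j.isLt.trans i.isLt⟩ ω),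
            (fun j : {j : Fin n // i < j} => S j.val ω),
            (fun j : Fin i.val => Y ⟨j.val, j.isLt.trans i.isLt⟩ ω)),
          S i ω)))
        = A i.val := by
      rw [hAdef]
      refine dH_congr' p _ _ fun ω ω' => ?_
      rw [show ((fun ω => (M₂ ω, M₃ ω, SS ω, Yp i.val ω)) ω
          = (fun ω => (M₂ ω, M₃ ω, SS ω, Yp i.val ω)) ω')
        ↔ (M₂ ω = M₂ ω' ∧ M₃ ω = M₃ ω' ∧ SS ω = SS ω' ∧ Yp i.val ω = Yp i.val ω') by
          simp [Prod.mk.injEq]]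
      rw [hS3 i ω ω', hYpre i ω ω']
      simp only [Prod.mk.injEq]
      tauto
    have E2 : dH p (fun ω => (Y i ω,
         ((M₃ ω,
            (fun j : Fin i.val => S ⟨j.val, j.isLt.trans i.isLt⟩ ω),
            (fun j : {j : Fin n // i < j} => S j.val ω),
            (fun j : Fin i.val => Y ⟨j.val, j.isLt.trans i.isLt⟩ ω)),
          S i ω)))
        = B (i.val + 1) := by
      rw [hBdef]
      refine dH_congr' p _ _ fun ω ω' => ?_
      rw [show ((fun ω => (M₃ ω, SS ω, Yp (i.val + 1) ω)) ω
          = (fun ω => (M₃ ω, SS ω, Yp (i.val + 1) ω)) ω')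
        ↔ (M₃ ω = M₃ ω' ∧ SS ω = SS ω' ∧ Yp (i.val + 1) ω = Yp (i.val + 1) ω') by
          simp [Prod.mk.injEq]]
      rw [hS3 i ω ω', hYsucc i ω ω', hYpre i ω ω']
      simp only [Prod.mk.injEq]
      tauto
    have E3 : dH p (fun ω =>
         ((M₃ ω,
            (fun j : Fin i.val => S ⟨j.val, j.isLt.trans i.isLt⟩ ω),
            (fun j : {j : Fin n // i < j} => S j.val ω),
            (fun j : Fin i.val => Y ⟨j.val, j.isLt.trans i.isLt⟩ ω)),
          S i ω))
        = B i.val := by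
      rw [hBdef]
      refine dH_congr' p _ _ fun ω ω' => ?_
      rw [show ((fun ω => (M₃ ω, SS ω, Yp i.val ω)) ω
          = (fun ω => (M₃ ω, SS ω, Yp i.val ω)) ω')
        ↔ (M₃ ω = M₃ ω' ∧ SS ω = SS ω' ∧ Yp i.val ω = Yp i.val ω') by
          simp [Prod.mk.injEq]]
      rw [hS3 i ω ω', hYpre i ω ω']
      simp only [Prod.mk.injEq]
      tauto
    have E4 : dH p (fun ω =>
        ((M₂ ω, M₃ ω, fun j : Fin i.val => Y ⟨j.val, j.isLt.trans i.isLt⟩ ω),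
         Y i ω,
         ((M₃ ω,
            (fun j : Fin i.val => S ⟨j.val, j.isLt.trans i.isLt⟩ ω),
            (fun j : {j : Fin n // i < j} => S j.val ω),
            (fun j : Fin i.val => Y ⟨j.val, j.isLt.trans i.isLt⟩ ω)),
          S i ω)))
        = A (i.val + 1) := by
      rw [hAdef]
      refine dH_congr' p _ _ fun ω ω' => ?_
      rw [show ((fun ω => (M₂ ω, M₃ ω, SS ω, Yp (i.val + 1) ω)) ω
          = (fun ω => (M₂ ω, M₃ ω, SS ω, Yp (i.val + 1) ω)) ω')
        ↔ (M₂ ω = M₂ ω' ∧ M₃ ω = M₃ ω' ∧ SS ω = SS ω'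
            ∧ Yp (i.val + 1) ω = Yp (i.val + 1) ω') by
          simp [Prod.mk.injEq]]
      rw [hS3 i ω ω', hYsucc i ω ω', hYpre i ω ω']
      simp only [Prod.mk.injEq]
      tauto
    rw [E1, E2, E3, E4]
    ring
  -- telescoping
  have hsum : ∑ i : Fin n,
      dCI p
        (fun ω => (M₂ ω, M₃ ω, fun j : Fin i.val => Y ⟨j.val, j.isLt.trans i.isLt⟩ ω))
        (Y i)
        (fun ω => ((M₃ ω,
            (fun j : Fin i.val => S ⟨j.val, j.isLt.trans i.isLt⟩ ω),
            (fun j : {j : Fin n // i < j} => S j.val ω),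
            (fun j : Fin i.val => Y ⟨j.val, j.isLt.trans i.isLt⟩ ω)),
          S i ω))
      = (B n - A n) - (B 0 - A 0) := by
    rw [Finset.sum_congr rfl fun i _ => hterm i]
    rw [Fin.sum_univ_eq_sum_range (fun k => (A k + B (k + 1)) - (B k + A (k + 1)))]
    have : ∀ k ∈ Finset.range n, (A k + B (k + 1)) - (B k + A (k + 1))
        = (fun m => B m - A m) (k + 1) - (fun m => B m - A m) k := by
      intro k _; simp only; ring
    rw [Finset.sum_congr rfl this, Finset.sum_range_sub (fun m => B m - A m) n]
  rw [L1, L2, hsum]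
  ring
end
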